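/- arXiv:1604.00548 — 2 statements merged into one kernel-verified Lean document; each statement's English description precedes it below -/
import Mathlib

section
/- Let T > 0, let f : ℝ^n × ℝ^m → ℝ^n be continuous, let φ : ℝ × ℝ^n × ℝ^m → ℝ^n be a flow map such that φ(0, x₀, θ) = x₀ and, for every (x₀, θ) and every t ∈ [0,T], t ↦ φ(t, x₀, θ) has derivative f(φ(t, x₀, θ), θ) at t. Let μ₀ be a finite measure on ℝ^n × ℝ^m. Define the terminal measure μ_T as the pushforward of μ₀ under (x₀, θ) ↦ (φ(T, x₀, θ), θ), and the average occupation measure μ on ℝ × ℝ^n × ℝ^m by μ(A) = ∫ (Lebesgue measure of { t ∈ [0,T] : (t, φ(t, x₀, θ), θ) ∈ A }) dμ₀(x₀, θ). Then for every continuously differentiable v : ℝ × ℝ^n × ℝ^m → ℝ with v and L_f v bounded on the relevant sets (e.g. v ∈ C¹ with compact support), the Liouville equation holds: ∫ v(T, y, θ) dμ_T(y, θ) = ∫ v(0, x₀, θ) dμ₀(x₀, θ) + ∫ L_f v(t, x, θ) dμ(t, x, θ). -/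
open MeasureTheory Set

/-- The Lie derivative of `v` along the parametrized vector field `f` (with `θ̇ = 0`). -/
noncomputable def lieDeriv {n m : ℕ} (f : (Fin n → ℝ) → (Fin m → ℝ) → (Fin n → ℝ))
    (v : ℝ × (Fin n → ℝ) × (Fin m → ℝ) → ℝ)
    (p : ℝ × (Fin n → ℝ) × (Fin m → ℝ)) : ℝ :=
  fderiv ℝ v p (1, f p.2.1 p.2.2, 0)

/-- The Liouville equation: with `μ_T` the pushforward of `μ₀` under the time-`T` flow
and `μ` the average occupation measure, for every `C¹` test function `v` with compact
support, `∫ v(T,·) dμ_T = ∫ v(0,·) dμ₀ + ∫ L_f v dμ`. -/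
theorem liouville_equation {n m : ℕ} (T : ℝ) (hT : 0 < T)
    (f : (Fin n → ℝ) → (Fin m → ℝ) → (Fin n → ℝ))
    (hf : Continuous fun p : (Fin n → ℝ) × (Fin m → ℝ) => f p.1 p.2)
    (φ : ℝ → (Fin n → ℝ) → (Fin m → ℝ) → (Fin n → ℝ))
    (hφmeas : Measurable fun q : ℝ × (Fin n → ℝ) × (Fin m → ℝ) => φ q.1 q.2.1 q.2.2)
    (hφ0 : ∀ (x₀ : Fin n → ℝ) (θ : Fin m → ℝ), φ 0 x₀ θ = x₀)
    (hφode : ∀ (x₀ : Fin n → ℝ) (θ : Fin m → ℝ), ∀ t ∈ Icc (0 : ℝ) T,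
      HasDerivAt (fun s => φ s x₀ θ) (f (φ t x₀ θ) θ) t)
    (μ₀ : Measure ((Fin n → ℝ) × (Fin m → ℝ))) [IsFiniteMeasure μ₀]
    (μT : Measure ((Fin n → ℝ) × (Fin m → ℝ)))
    (hμT : μT = Measure.map (fun p : (Fin n → ℝ) × (Fin m → ℝ) => (φ T p.1 p.2, p.2)) μ₀)
    (μ : Measure (ℝ × (Fin n → ℝ) × (Fin m → ℝ)))
    (hμ : ∀ A : Set (ℝ × (Fin n → ℝ) × (Fin m → ℝ)), MeasurableSet A →
      μ A = ∫⁻ p : (Fin n → ℝ) × (Fin m → ℝ),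
        volume {t ∈ Icc (0 : ℝ) T | (t, φ t p.1 p.2, p.2) ∈ A} ∂μ₀)
    (v : ℝ × (Fin n → ℝ) × (Fin m → ℝ) → ℝ)
    (hv : ContDiff ℝ 1 v) (hvsupp : HasCompactSupport v) :
    ∫ p, v (T, p.1, p.2) ∂μT = ∫ p, v (0, p.1, p.2) ∂μ₀ + ∫ q, lieDeriv f v q ∂μ := by
  classical
  -- continuity of the Lie derivative
  have hKcont : Continuous (lieDeriv f v) := by
    have h1 : Continuous (fderiv ℝ v) := hv.continuous_fderiv one_ne_zero
    have h2 : Continuous fun p : ℝ × (Fin n → ℝ) × (Fin m → ℝ) =>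
        ((1 : ℝ), f p.2.1 p.2.2, (0 : Fin m → ℝ)) :=
      continuous_const.prodMk ((hf.comp continuous_snd).prodMk continuous_const)
    exact h1.clm_apply h2
  -- compact support of the Lie derivative
  have hKsupp : HasCompactSupport (lieDeriv f v) := by
    apply (hvsupp.fderiv ℝ).mono
    intro x hx
    simp only [Function.mem_support, lieDeriv] at hx ⊢
    intro h
    exact hx (by rw [h]; rfl)
  obtain ⟨CK, hCK⟩ := hKsupp.exists_bound_of_continuous hKcont
  obtain ⟨Cv, hCv⟩ := hvsupp.exists_bound_of_continuous hv.continuous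
  -- the flow map as a function of (t, p)
  have hΦmeas : Measurable (fun q : ℝ × (Fin n → ℝ) × (Fin m → ℝ) =>
      (q.1, φ q.1 q.2.1 q.2.2, q.2.2)) :=
    measurable_fst.prodMk (hφmeas.prodMk (measurable_snd.comp measurable_snd))
  haveI : IsFiniteMeasure (volume.restrict (Icc (0:ℝ) T)) :=
    ⟨by rw [Measure.restrict_apply_univ]; exact measure_Icc_lt_top⟩
  haveI : IsFiniteMeasure ((volume.restrict (Icc (0:ℝ) T)).prod μ₀) := by infer_instance
  -- μ is the pushforward of the product measure under the flow map
  have hμeq : μ = Measure.map (fun q : ℝ × (Fin n → ℝ) × (Fin m → ℝ) =>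
      (q.1, φ q.1 q.2.1 q.2.2, q.2.2)) ((volume.restrict (Icc (0:ℝ) T)).prod μ₀) := by
    ext A hA
    rw [Measure.map_apply hΦmeas hA, hμ A hA, Measure.prod_apply_symm (hΦmeas hA)]
    congr 1
    ext p
    rw [Measure.restrict_apply' measurableSet_Icc]
    congr 1
    ext t
    simp only [mem_inter_iff, mem_setOf_eq, mem_sep_iff, mem_preimage]
    tauto
  -- integrability of lieDeriv ∘ flow on the product measure
  have hintKΦ : Integrable (fun q : ℝ × (Fin n → ℝ) × (Fin m → ℝ) =>
      lieDeriv f v (q.1, φ q.1 q.2.1 q.2.2, q.2.2)) ((volume.restrict (Icc (0:ℝ) T)).prod μ₀) :=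
    ⟨(hKcont.measurable.comp hΦmeas).aestronglyMeasurable,
      HasFiniteIntegral.of_bounded (C := CK) (ae_of_all _ fun q => hCK _)⟩
  -- FTC along each trajectory
  have hFTC : ∀ p : (Fin n → ℝ) × (Fin m → ℝ),
      ∫ t in Icc (0:ℝ) T, lieDeriv f v (t, φ t p.1 p.2, p.2) =
      v (T, φ T p.1 p.2, p.2) - v (0, p.1, p.2) := by
    intro p
    have hcontφ : ContinuousOn (fun t => φ t p.1 p.2) (Icc 0 T) := fun t ht =>
      ((hφode p.1 p.2 t ht).continuousAt).continuousWithinAt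
    have hderiv : ∀ t ∈ uIcc (0:ℝ) T,
        HasDerivAt (fun s => v (s, φ s p.1 p.2, p.2)) (lieDeriv f v (t, φ t p.1 p.2, p.2)) t := by
      intro t ht
      rw [uIcc_of_le hT.le] at ht
      have h1 : HasDerivAt (fun s => ((s : ℝ), φ s p.1 p.2, p.2))
          ((1 : ℝ), f (φ t p.1 p.2) p.2, (0 : Fin m → ℝ)) t :=
        (hasDerivAt_id t).prodMk ((hφode p.1 p.2 t ht).prodMk (hasDerivAt_const t p.2))
      have h2 := ((hv.differentiable one_ne_zero (t, φ t p.1 p.2, p.2)).hasFDerivAt).comp_hasDerivAt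
        t h1
      exact h2
    have hcont' : ContinuousOn (fun t => lieDeriv f v (t, φ t p.1 p.2, p.2)) (Icc 0 T) := by
      apply hKcont.comp_continuousOn
      exact continuous_id.continuousOn.prodMk (hcontφ.prodMk continuousOn_const)
    have hInt : IntervalIntegrable (fun t => lieDeriv f v (t, φ t p.1 p.2, p.2)) volume 0 T := by
      apply ContinuousOn.intervalIntegrable
      rwa [uIcc_of_le hT.le]
    have h3 := intervalIntegral.integral_eq_sub_of_hasDerivAt hderiv hInt
    rw [intervalIntegral.integral_of_le hT.le] at h3
    rw [integral_Icc_eq_integral_Ioc, h3, hφ0]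
  -- the occupation integral via Fubini
  have hocc : ∫ q, lieDeriv f v q ∂μ =
      ∫ p, (v (T, φ T p.1 p.2, p.2) - v (0, p.1, p.2)) ∂μ₀ := by
    rw [hμeq, integral_map hΦmeas.aemeasurable hKcont.aestronglyMeasurable,
      integral_prod_symm _ hintKΦ]
    exact integral_congr_ae (ae_of_all _ fun p => hFTC p)
  -- measurability of flow at time T
  have hmT : Measurable fun p : (Fin n → ℝ) × (Fin m → ℝ) => (φ T p.1 p.2, p.2) := by
    have h4 : Measurable fun p : (Fin n → ℝ) × (Fin m → ℝ) => φ T p.1 p.2 :=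
      hφmeas.comp (measurable_const.prodMk measurable_id)
    exact h4.prodMk measurable_snd
  have hcT : Continuous fun p : (Fin n → ℝ) × (Fin m → ℝ) => v (T, p.1, p.2) :=
    hv.continuous.comp' (continuous_const.prodMk (continuous_fst.prodMk continuous_snd))
  have hc0 : Continuous fun p : (Fin n → ℝ) × (Fin m → ℝ) => v (0, p.1, p.2) :=
    hv.continuous.comp' (continuous_const.prodMk (continuous_fst.prodMk continuous_snd))
  -- LHS via pushforward
  have hLHS : ∫ p, v (T, p.1, p.2) ∂μT = ∫ p, v (T, φ T p.1 p.2, p.2) ∂μ₀ := by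
    rw [hμT, integral_map hmT.aemeasurable hcT.aestronglyMeasurable]
  -- integrability of the two boundary terms
  have hintT : Integrable (fun p : (Fin n → ℝ) × (Fin m → ℝ) => v (T, φ T p.1 p.2, p.2)) μ₀ :=
    ⟨(hcT.measurable.comp hmT).aestronglyMeasurable,
      HasFiniteIntegral.of_bounded (C := Cv) (ae_of_all _ fun p => hCv _)⟩
  have hint0 : Integrable (fun p : (Fin n → ℝ) × (Fin m → ℝ) => v (0, p.1, p.2)) μ₀ :=
    ⟨hc0.measurable.aestronglyMeasurable,
      HasFiniteIntegral.of_bounded (C := Cv) (ae_of_all _ fun p => hCv _)⟩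
  rw [hLHS, hocc, integral_sub hintT hint0]
  ring
end

section
/- Let X ⊆ ℝ^n and Θ ⊆ ℝ^m be compact, X_T ⊆ X, T > 0, and f : ℝ^n × ℝ^m → ℝ^n continuous. Suppose (v, w) with v ∈ C¹(ℝ × ℝ^n × ℝ^m, ℝ) and w : ℝ^n × ℝ^m → ℝ continuous is feasible for the dual problem (D), i.e.: L_f v(t,x,θ) ≤ 0 for all (t,x,θ) ∈ [0,T] × X × Θ; w(x,θ) ≥ 0 for all (x,θ) ∈ X × Θ; w(x,θ) ≥ 1 + v(0,x,θ) for all (x,θ) ∈ X × Θ; and v(T,x,θ) ≥ 0 for all (x,θ) ∈ X_T × Θ. If (x₀, θ) ∈ X × Θ is such that there exists a trajectory γ : [0,T] → ℝ^n with γ(0) = x₀, γ'(t) = f(γ(t), θ) and γ(t) ∈ X for all t ∈ [0,T], and γ(T) ∈ X_T, then w(x₀, θ) ≥ 1. In particular, the 1-super-level set { (x,θ) : w(x,θ) ≥ 1 } contains the full backwards reachable set X₀^full. -/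
open MeasureTheory Set

/-- If `(v, w)` is feasible for the dual problem (D), then the 1-super-level set of `w`
contains the full backwards reachable set: every `(x₀, θ) ∈ X × Θ` whose trajectory stays
in `X` on `[0,T]` and hits `X_T` at time `T` satisfies `w (x₀, θ) ≥ 1`. -/
theorem superlevel_contains_brs {n m : ℕ} (T : ℝ) (hT : 0 < T)
    (X : Set (Fin n → ℝ)) (Θ : Set (Fin m → ℝ)) (XT : Set (Fin n → ℝ))
    (hX : IsCompact X) (hΘ : IsCompact Θ) (hXT : IsCompact XT) (hXTX : XT ⊆ X)
    (f : (Fin n → ℝ) → (Fin m → ℝ) → (Fin n → ℝ))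
    (hf : Continuous fun p : (Fin n → ℝ) × (Fin m → ℝ) => f p.1 p.2)
    (v : ℝ × (Fin n → ℝ) × (Fin m → ℝ) → ℝ) (hv : ContDiff ℝ 1 v)
    (w : (Fin n → ℝ) × (Fin m → ℝ) → ℝ) (hw : Continuous w)
    (hd1 : ∀ t ∈ Icc (0 : ℝ) T, ∀ x ∈ X, ∀ θ ∈ Θ, lieDeriv f v (t, x, θ) ≤ 0)
    (hd2 : ∀ x ∈ X, ∀ θ ∈ Θ, 0 ≤ w (x, θ))
    (hd3 : ∀ x ∈ X, ∀ θ ∈ Θ, 1 + v (0, x, θ) ≤ w (x, θ))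
    (hd4 : ∀ x ∈ XT, ∀ θ ∈ Θ, 0 ≤ v (T, x, θ)) :
    {p : (Fin n → ℝ) × (Fin m → ℝ) | p ∈ X ×ˢ Θ ∧
        ∃ γ : ℝ → (Fin n → ℝ), γ 0 = p.1 ∧
          (∀ t ∈ Icc (0 : ℝ) T, HasDerivAt γ (f (γ t) p.2) t ∧ γ t ∈ X) ∧
          γ T ∈ XT} ⊆
      {p : (Fin n → ℝ) × (Fin m → ℝ) | 1 ≤ w p} := by
  rintro ⟨x₀, θ⟩ ⟨⟨hx₀, hθ⟩, γ, hγ0, hγ, hγT⟩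
  set g : ℝ → ℝ := fun t => v (t, γ t, θ) with hg
  -- derivative of g on Icc
  have hderiv : ∀ t ∈ Icc (0 : ℝ) T,
      HasDerivAt g (lieDeriv f v (t, γ t, θ)) t := by
    intro t ht
    have hγd := (hγ t ht).1
    have hcurve : HasDerivAt (fun s => ((s, γ s, θ) : ℝ × (Fin n → ℝ) × (Fin m → ℝ)))
        ((1 : ℝ), f (γ t) θ, (0 : Fin m → ℝ)) t := by
      exact HasDerivAt.prodMk (hasDerivAt_id t) (HasDerivAt.prodMk hγd (hasDerivAt_const t θ))
    have hvd : HasFDerivAt v (fderiv ℝ v (t, γ t, θ)) (t, γ t, θ) :=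
      (hv.differentiable one_ne_zero (t, γ t, θ)).hasFDerivAt
    have := hvd.comp_hasDerivAt t hcurve
    exact this
  have hcont : ContinuousOn g (Icc 0 T) := fun t ht =>
    (hderiv t ht).continuousAt.continuousWithinAt
  have hmono : AntitoneOn g (Icc 0 T) := by
    apply antitoneOn_of_deriv_nonpos (convex_Icc 0 T) hcont
    · intro t ht
      rw [interior_Icc] at ht
      exact ((hderiv t (Ioo_subset_Icc_self ht)).differentiableAt).differentiableWithinAt
    · intro t ht
      rw [interior_Icc] at ht
      have ht' := Ioo_subset_Icc_self ht
      rw [(hderiv t ht').deriv]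
      exact hd1 t ht' (γ t) (hγ t ht').2 θ hθ
  have h1 : g T ≤ g 0 := hmono (left_mem_Icc.2 hT.le) (right_mem_Icc.2 hT.le) hT.le
  have h2 : 0 ≤ g T := hd4 (γ T) hγT θ hθ
  have h3 : 1 + v (0, x₀, θ) ≤ w (x₀, θ) := hd3 x₀ hx₀ θ hθ
  have : 0 ≤ v (0, x₀, θ) := by
    have : g 0 = v (0, x₀, θ) := by simp [hg, hγ0]
    linarith [h1, h2, this]
  simp only [mem_setOf_eq]
  linarith
end
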